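/- arXiv:2001.02124 — 4 statements merged into one kernel-verified Lean document; each statement's English description precedes it below -/
import Mathlib

section
/- Let U be a σ-complete ultrafilter over a set A, let μ ≤ ν be cardinals with ν regular, and let j : V → M be the ultrapower embedding induced by U. Then U is (μ, ν)-regular if and only if the cofinality of sup(j''ν), computed in M, is strictly less than j(μ). -/
open Cardinal Filter

/-- A filter is σ-complete (countably complete). -/
def SigmaComplete {A : Type} (F : Filter A) : Prop :=
  ∀ s : Set (Set A), s.Countable → (∀ t ∈ s, t ∈ F) → ⋂₀ s ∈ F

/-- `U` is a `(μ, ν)`-regular ultrafilter. -/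
def IsRegUF {A : Type} (U : Ultrafilter A) (μ ν : Cardinal) : Prop :=
  ∃ (ι : Type) (X : ι → Set A), #ι = ν ∧ (∀ i, X i ∈ U) ∧
    ∀ s : Set ι, #s = μ → ⋂ i ∈ s, X i = ∅

private lemma equiv_of_lift_mk_eq' {α : Type} {β : Type 1} (h : Cardinal.lift.{1, 0} #α = #β) :
    Nonempty (α ≃ β) := by
  apply Cardinal.lift_mk_eq'.mp
  rw [h]
  simp

private lemma sSup_lt_ord_of_small' {o : Ordinal.{0}} (ho : 0 < o) (S : Set Ordinal.{0})
    (hS : ∀ x ∈ S, x < o) (hcard : #S < Cardinal.lift.{1, 0} o.cof) : sSup S < o := by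
  rcases Cardinal.lt_lift_iff.mp hcard with ⟨c, hc, hcc⟩
  rcases Set.eq_empty_or_nonempty S with rfl | hne
  · simpa using ho
  have he : Nonempty (c.out ≃ ↥S) := by
    apply Cardinal.lift_mk_eq'.mp
    rw [Cardinal.mk_out, hcc]
    simp
  obtain ⟨e⟩ := he
  have hrange : Set.range (fun i : c.out => (e i).1) = S := by
    ext x; constructor
    · rintro ⟨i, rfl⟩; exact (e i).2
    · intro hx; exact ⟨e.symm ⟨x, hx⟩, by simp⟩
  have h2 : iSup (fun i : c.out => (e i).1) < o := by
    apply Ordinal.iSup_lt_ord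
    · rwa [Cardinal.mk_out]
    · intro i; exact hS _ (e i).2
  calc sSup S = sSup (Set.range fun i : c.out => (e i).1) := by rw [hrange]
  _ < o := h2

private lemma sigma_iInter' {A : Type} {U : Ultrafilter A} (hU : SigmaComplete (U : Filter A))
    (T : ℕ → Set A) (hT : ∀ n, T n ∈ U) : (⋂ n, T n) ∈ U := by
  have h := hU (Set.range T) (Set.countable_range T) (by rintro t ⟨n, rfl⟩; exact hT n)
  rw [Set.sInter_range] at h
  exact h

section germfacts

variable {A : Type} {U : Ultrafilter A} {ν : Cardinal.{0}}
  {s : (U : Filter A).Germ Ordinal}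
  (hs : IsLUB {g : (U : Filter A).Germ Ordinal |
      ∃ α : Ordinal, α < ν.ord ∧ g = ↑(fun _ : A => α)} s)
  {f : A → Ordinal} (hfs : (↑f : (U : Filter A).Germ Ordinal) = s)

include hs hfs

private lemma const_le_mem' : ∀ β < ν.ord, {a | β ≤ f a} ∈ U := by
  intro β hβ
  have h1 : (↑(fun _ : A => β) : (U : Filter A).Germ Ordinal) ≤ ↑f := by
    rw [hfs]; exact hs.1 ⟨β, hβ, rfl⟩
  rw [Filter.Germ.coe_le] at h1
  exact h1

private lemma lt_notub' {g : A → Ordinal} (hg : {a | g a < f a} ∈ U) :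
    ∃ β < ν.ord, {a | g a < β} ∈ U := by
  by_contra hc
  push_neg at hc
  have hub : (↑g : (U : Filter A).Germ Ordinal) ∈ upperBounds
      {g : (U : Filter A).Germ Ordinal | ∃ α : Ordinal, α < ν.ord ∧ g = ↑(fun _ : A => α)} := by
    rintro x ⟨β, hβ, rfl⟩
    rw [Filter.Germ.coe_le]
    have h2 := hc β hβ
    rw [← Ultrafilter.compl_mem_iff_notMem] at h2
    have heq : {a | g a < β}ᶜ = {a | β ≤ g a} := by
      ext a; simp [not_lt]
    rw [heq] at h2
    exact h2
  have hle : s ≤ ↑g := hs.2 hub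
  rw [← hfs, Filter.Germ.coe_le] at hle
  have hle' : {a | f a ≤ g a} ∈ (U : Filter A) := hle
  have hg' : {a | g a < f a} ∈ (U : Filter A) := hg
  have this2 : {a | f a ≤ g a} ∩ {a | g a < f a} ∈ (U : Filter A) := Filter.inter_mem hle' hg'
  have hne := Filter.nonempty_of_mem this2
  rcases hne with ⟨a, h1, h2⟩
  simp only [Set.mem_setOf_eq] at h1 h2
  exact absurd h2 (not_lt.mpr h1)

private lemma limit_ae' (hν0 : ℵ₀ ≤ ν) : {a | Order.IsSuccLimit (f a)} ∈ U := by
  classical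
  have hordlim : Order.IsSuccLimit ν.ord := Cardinal.isSuccLimit_ord hν0
  have h1ν : (1 : Ordinal) < ν.ord := Ordinal.one_lt_of_isSuccLimit hordlim
  have hne0 : {a | f a = 0} ∉ U := by
    intro h0
    have h1 := const_le_mem' hs hfs 1 h1ν
    have h1' : {a | (1:Ordinal) ≤ f a} ∈ (U : Filter A) := h1
    have h0' : {a | f a = 0} ∈ (U : Filter A) := h0
    have hne : ({a | (1:Ordinal) ≤ f a} ∩ {a | f a = 0}).Nonempty :=
      Filter.nonempty_of_mem (Filter.inter_mem h1' h0')
    rcases hne with ⟨a, ha1, ha0⟩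
    simp only [Set.mem_setOf_eq] at ha1 ha0
    rw [ha0] at ha1
    exact absurd ha1 (by simp)
  have hnsucc : {a | ∃ p, f a = Order.succ p} ∉ U := by
    intro hsucc
    set g : A → Ordinal := fun a => if h : ∃ p, f a = Order.succ p then h.choose else 0 with hg
    have hgf : {a | g a < f a} ∈ U := by
      apply Filter.mem_of_superset hsucc
      intro a ha
      simp only [Set.mem_setOf_eq] at ha ⊢
      rw [hg]
      simp only [dif_pos ha]
      have hcs := ha.choose_spec
      exact lt_of_lt_of_le (Order.lt_succ _) (le_of_eq hcs.symm)
    obtain ⟨β, hβ, hgβ⟩ := lt_notub' hs hfs hgf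
    have hβ1 : β + 1 < ν.ord := by
      rw [Ordinal.add_one_eq_succ]
      exact hordlim.succ_lt hβ
    have hcm := const_le_mem' hs hfs (β + 1) hβ1
    have hcm' : {a | β + 1 ≤ f a} ∈ (U : Filter A) := hcm
    have hgβ' : {a | g a < β} ∈ (U : Filter A) := hgβ
    have hsucc' : {a | ∃ p, f a = Order.succ p} ∈ (U : Filter A) := hsucc
    have hne : ({a | β + 1 ≤ f a} ∩ ({a | g a < β} ∩ {a | ∃ p, f a = Order.succ p})).Nonempty :=
      Filter.nonempty_of_mem (Filter.inter_mem hcm' (Filter.inter_mem hgβ' hsucc'))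
    rcases hne with ⟨a, h1, h2, h3⟩
    simp only [Set.mem_setOf_eq] at h1 h2 h3
    have hfa : f a = Order.succ (g a) := by
      rw [hg]; simp only [dif_pos h3]; exact h3.choose_spec
    rw [hfa, Ordinal.add_one_eq_succ, Order.succ_le_succ_iff] at h1
    exact absurd h2 (not_lt.mpr h1)
  rw [← Ultrafilter.compl_mem_iff_notMem] at hne0 hnsucc
  have hne0' : {a | f a = 0}ᶜ ∈ (U : Filter A) := hne0
  have hnsucc' : {a | ∃ p, f a = Order.succ p}ᶜ ∈ (U : Filter A) := hnsucc
  have hint := Filter.inter_mem hne0' hnsucc'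
  apply Filter.mem_of_superset hint
  rintro a ⟨ha0, hasucc⟩
  simp only [Set.mem_compl_iff, Set.mem_setOf_eq] at ha0 hasucc
  rcases Ordinal.zero_or_succ_or_isSuccLimit (f a) with h | h | h
  · exact absurd h ha0
  · exact absurd (let ⟨p, hp⟩ := h; ⟨p, hp.symm⟩) hasucc
  · exact h

end germfacts

private lemma forward' {A : Type} {U : Ultrafilter A} {μ ν : Cardinal.{0}} (hν : ν.IsRegular)
    {s : (U : Filter A).Germ Ordinal}
    (hs : IsLUB {g : (U : Filter A).Germ Ordinal |
      ∃ α : Ordinal, α < ν.ord ∧ g = ↑(fun _ : A => α)} s)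
    (hreg : IsRegUF U μ ν) :
    ∃ f : A → Ordinal, (↑f : (U : Filter A).Germ Ordinal) = s ∧
        {a : A | (f a).cof < μ} ∈ U := by
  classical
  obtain ⟨ι, X, hι, hX, hint⟩ := hreg
  obtain ⟨f₀, hf₀⟩ := Quotient.exists_rep s
  have hf₀' : (↑f₀ : (U : Filter A).Germ Ordinal) = s := hf₀
  refine ⟨f₀, hf₀', ?_⟩
  have hordlim : Order.IsSuccLimit ν.ord := Cardinal.isSuccLimit_ord hν.1
  -- μ = 0 is impossible together with regularity
  by_cases hμ0 : μ = 0
  · exfalso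
    have hemp := hint ∅ (by simp [hμ0])
    rw [Set.biInter_empty] at hemp
    have : (∅ : Set A) ∈ (U : Filter A) := by
      rw [← hemp]; exact Filter.univ_mem
    exact Filter.empty_notMem (U : Filter A) this
  have hμpos : 0 < μ := pos_iff_ne_zero.mpr hμ0
  by_contra hT
  rw [← Ultrafilter.compl_mem_iff_notMem] at hT
  -- the traces
  set D : A → Set ι := fun a => {i | a ∈ X i} with hD
  have hDsmall : ∀ a, #(D a) < μ := by
    intro a
    rw [← not_le]
    intro hge
    obtain ⟨p, hp⟩ := Cardinal.le_mk_iff_exists_set.mp hge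
    have hps : #(Subtype.val '' p : Set ι) = μ := by
      rw [Cardinal.mk_image_eq Subtype.val_injective, hp]
    have hemp := hint _ hps
    have ha : a ∈ ⋂ i ∈ (Subtype.val '' p : Set ι), X i := by
      rw [Set.mem_iInter₂]
      rintro i ⟨x, hx, rfl⟩
      exact x.2
    rw [hemp] at ha
    exact ha
  -- transfer to ordinal labels
  have hee : Nonempty (ι ≃ ↥(Set.Iio ν.ord)) := by
    apply equiv_of_lift_mk_eq'
    rw [hι, Ordinal.mk_Iio_ordinal, Cardinal.card_ord]
  obtain ⟨e'⟩ := hee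
  set e : ↥(Set.Iio ν.ord) → ι := fun β => e'.symm β with he
  set E : A → Set Ordinal := fun a => (fun β : ↥(Set.Iio ν.ord) => β.1) '' {β | e β ∈ D a}
    with hE
  have hcatch : ∀ β, (hβ : β < ν.ord) → {a | β ∈ E a} ∈ U := by
    intro β hβ
    have hset : {a | β ∈ E a} = X (e ⟨β, hβ⟩) := by
      ext a
      simp only [Set.mem_setOf_eq, hE]
      constructor
      · rintro ⟨β', hβ', hval⟩
        have : β' = ⟨β, hβ⟩ := Subtype.ext hval
        rw [this] at hβ'
        exact hβ'
      · intro hXa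
        exact ⟨⟨β, hβ⟩, hXa, rfl⟩
    rw [hset]
    exact hX _
  have hEsmall : ∀ a, #(E a) < Cardinal.lift.{1,0} μ := by
    intro a
    have h1 : #(E a) = #{β : ↥(Set.Iio ν.ord) | e β ∈ D a} :=
      Cardinal.mk_image_eq Subtype.val_injective
    have h2 : Nonempty ({β : ↥(Set.Iio ν.ord) | e β ∈ D a} ≃ ↥(D a)) := by
      refine ⟨Equiv.subtypeEquiv e'.symm ?_⟩
      intro β
      exact Iff.rfl
    have h2' : Cardinal.lift.{1,0} #(↥(D a)) = Cardinal.lift.{0,1} #{β : ↥(Set.Iio ν.ord) | e β ∈ D a} :=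
      Cardinal.lift_mk_eq'.mpr ⟨h2.some.symm⟩
    have h3 : #{β : ↥(Set.Iio ν.ord) | e β ∈ D a} = Cardinal.lift.{1,0} #(↥(D a)) := by
      rw [h2']
      simp
    rw [h1, h3]
    exact Cardinal.lift_lt.mpr (hDsmall a)
  -- the bounding function
  set g : A → Ordinal := fun a => sSup (E a ∩ Set.Iio (f₀ a)) with hg
  have hgf : ∀ a ∈ {a | ¬ (f₀ a).cof < μ}, g a < f₀ a := by
    intro a ha
    simp only [Set.mem_setOf_eq, not_lt] at ha
    have hfa0 : 0 < f₀ a := by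
      rw [pos_iff_ne_zero]
      intro h0
      rw [h0] at ha
      simp only [Ordinal.cof_zero] at ha
      exact absurd (lt_of_lt_of_le hμpos ha) (lt_irrefl _)
    apply sSup_lt_ord_of_small' hfa0
    · intro x hx; exact hx.2
    · calc #(E a ∩ Set.Iio (f₀ a) : Set Ordinal) ≤ #(E a) :=
        Cardinal.mk_le_mk_of_subset Set.inter_subset_left
      _ < Cardinal.lift.{1,0} μ := hEsmall a
      _ ≤ Cardinal.lift.{1,0} (f₀ a).cof := Cardinal.lift_le.mpr ha
  have hgfU : {a | g a < f₀ a} ∈ U := by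
    apply Filter.mem_of_superset hT
    intro a ha
    exact hgf a ha
  obtain ⟨β, hβ, hgβ⟩ := lt_notub' hs hf₀' hgfU
  have hβ1 : β + 1 < ν.ord := by
    rw [Ordinal.add_one_eq_succ]; exact hordlim.succ_lt hβ
  have hcm := const_le_mem' hs hf₀' (β + 1) hβ1
  have hcm' : {a | β + 1 ≤ f₀ a} ∈ (U : Filter A) := hcm
  have hgβ' : {a | g a < β} ∈ (U : Filter A) := hgβ
  have hcatchβ : {a | β ∈ E a} ∈ (U : Filter A) := hcatch β hβ
  have hne : ({a | β + 1 ≤ f₀ a} ∩ ({a | g a < β} ∩ {a | β ∈ E a})).Nonempty :=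
    Filter.nonempty_of_mem (Filter.inter_mem hcm' (Filter.inter_mem hgβ' hcatchβ))
  rcases hne with ⟨a, h1, h2, h3⟩
  simp only [Set.mem_setOf_eq] at h1 h2 h3
  have hβfa : β < f₀ a := by
    have hzz : β < β + 1 := by
      rw [Ordinal.add_one_eq_succ]; exact Order.lt_succ β
    exact lt_of_lt_of_le hzz h1
  have hmem : β ∈ E a ∩ Set.Iio (f₀ a) := ⟨h3, hβfa⟩
  have hβg : β ≤ g a := by
    apply le_csSup ⟨f₀ a, ?_⟩ hmem
    intro w hw
    exact hw.2.le
  exact absurd h2 (not_lt.mpr hβg)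

private lemma backward' {A : Type} {U : Ultrafilter A} (hU : SigmaComplete (U : Filter A))
    {μ ν : Cardinal.{0}} (hμν : μ ≤ ν) (hν : ν.IsRegular)
    {s : (U : Filter A).Germ Ordinal}
    (hs : IsLUB {g : (U : Filter A).Germ Ordinal |
      ∃ α : Ordinal, α < ν.ord ∧ g = ↑(fun _ : A => α)} s)
    {f : A → Ordinal} (hfs : (↑f : (U : Filter A).Germ Ordinal) = s)
    (hf : {a : A | (f a).cof < μ} ∈ U) : IsRegUF U μ ν := by
  classical
  have hordlim : Order.IsSuccLimit ν.ord := Cardinal.isSuccLimit_ord hν.1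
  have hordpos : (0 : Ordinal) < ν.ord := hordlim.pos
  have hlim : {a | Order.IsSuccLimit (f a)} ∈ U := limit_ae' hs hfs hν.1
  -- small values of μ are impossible
  by_cases hμω : μ ≤ ℵ₀
  · exfalso
    have hlim' : {a | Order.IsSuccLimit (f a)} ∈ (U : Filter A) := hlim
    have hf' : {a : A | (f a).cof < μ} ∈ (U : Filter A) := hf
    have hne : ({a | Order.IsSuccLimit (f a)} ∩ {a : A | (f a).cof < μ}).Nonempty :=
      Filter.nonempty_of_mem (Filter.inter_mem hlim' hf')
    rcases hne with ⟨a, h1, h2⟩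
    simp only [Set.mem_setOf_eq] at h1 h2
    have : ℵ₀ ≤ (f a).cof := Ordinal.aleph0_le_cof.mpr h1
    exact absurd (lt_of_le_of_lt this h2) (not_lt.mpr hμω)
  have hμbig : ℵ₀ < μ := not_le.mp hμω
  have hμpos : (0 : Cardinal) < μ := lt_trans aleph0_pos hμbig
  have hμ1 : (1 : Cardinal) < Cardinal.lift.{1,0} μ := by
    have : (1 : Cardinal.{0}) < μ := lt_trans one_lt_aleph0 hμbig
    have h2 : Cardinal.lift.{1,0} (1 : Cardinal.{0}) < Cardinal.lift.{1,0} μ :=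
      Cardinal.lift_lt.mpr this
    simpa using h2
  have hℵμ : ℵ₀ ≤ Cardinal.lift.{1,0} μ := by
    have h2 := Cardinal.lift_le.{1,0}.mpr hμbig.le
    simpa using h2
  -- choose pointwise cofinal sets
  have hCex : ∀ a, ∃ C : Set Ordinal.{0}, #C < Cardinal.lift.{1,0} μ ∧
      (Order.IsSuccLimit (f a) ∧ (f a).cof < μ →
        (∀ x ∈ C, x < f a) ∧ (∀ b, b < f a → ∃ x ∈ C, b ≤ x)) := by
    intro a
    by_cases h : Order.IsSuccLimit (f a) ∧ (f a).cof < μ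
    · obtain ⟨ι₀, fam, hlsub, hmk⟩ := Ordinal.exists_lsub_cof (f a)
      refine ⟨Set.range fam, ?_, fun _ => ⟨?_, ?_⟩⟩
      · have h1 : Cardinal.lift.{0,1} #(Set.range fam) ≤ Cardinal.lift.{1,0} #ι₀ :=
          Cardinal.mk_range_le_lift
        rw [hmk] at h1
        have h1' : #(Set.range fam) ≤ Cardinal.lift.{1,0} (f a).cof := by simpa using h1
        exact lt_of_le_of_lt h1' (Cardinal.lift_lt.mpr h.2)
      · rintro x ⟨i, rfl⟩
        rw [← hlsub]
        exact Ordinal.lt_lsub fam i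
      · intro b hb
        rw [← hlsub] at hb
        obtain ⟨i, hi⟩ := Ordinal.lt_lsub_iff.mp hb
        exact ⟨fam i, ⟨i, rfl⟩, hi⟩
    · refine ⟨∅, ?_, fun hcontra => absurd hcontra h⟩
      rw [Cardinal.mk_emptyCollection]
      exact lt_of_lt_of_le zero_lt_one hμ1.le
  choose C hCsmall hCgood using hCex
  set cmin : Ordinal → A → Ordinal := fun z a => sInf (C a ∩ Set.Ioi z) with hcmin
  have hgood : {a | Order.IsSuccLimit (f a) ∧ (f a).cof < μ} ∈ (U : Filter A) := by
    have hlim' : {a | Order.IsSuccLimit (f a)} ∈ (U : Filter A) := hlim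
    have hf' : {a : A | (f a).cof < μ} ∈ (U : Filter A) := hf
    apply Filter.mem_of_superset (Filter.inter_mem hlim' hf')
    rintro a ⟨h1, h2⟩
    exact ⟨h1, h2⟩
  have hP : ∀ z, z < ν.ord →
      {a | cmin z a ∈ C a ∧ z < cmin z a ∧ cmin z a < f a} ∈ (U : Filter A) := by
    intro z hz
    have hz1 : z + 1 < ν.ord := by
      rw [Ordinal.add_one_eq_succ]; exact hordlim.succ_lt hz
    have h1 : {a | z + 1 ≤ f a} ∈ (U : Filter A) := const_le_mem' hs hfs (z + 1) hz1
    apply Filter.mem_of_superset (Filter.inter_mem hgood h1)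
    rintro a ⟨hga, hza⟩
    simp only [Set.mem_setOf_eq] at hga hza ⊢
    obtain ⟨hlt, hub⟩ := hCgood a hga
    have hzz : z < z + 1 := by
      rw [Ordinal.add_one_eq_succ]; exact Order.lt_succ z
    have hzfa : z < f a := lt_of_lt_of_le hzz hza
    have hzfa' : z + 1 < f a := by
      rw [Ordinal.add_one_eq_succ]
      exact hga.1.succ_lt hzfa
    obtain ⟨x, hxC, hxge⟩ := hub (z + 1) hzfa'
    have hxIoi : x ∈ C a ∩ Set.Ioi z := ⟨hxC, lt_of_lt_of_le hzz hxge⟩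
    have hmemInf := csInf_mem ⟨x, hxIoi⟩
    exact ⟨hmemInf.1, hmemInf.2, hlt _ hmemInf.1⟩
  have hgnex : ∀ z, ∃ β, z < ν.ord → (β < ν.ord ∧ {a | cmin z a < β} ∈ U) := by
    intro z
    by_cases hz : z < ν.ord
    · have hPz := hP z hz
      have hcf : {a | cmin z a < f a} ∈ U := by
        apply Filter.mem_of_superset hPz
        rintro a ⟨_, _, h3⟩
        exact h3
      obtain ⟨β, hβ, hβU⟩ := lt_notub' hs hfs hcf
      exact ⟨β, fun _ => ⟨hβ, hβU⟩⟩
    · exact ⟨0, fun h => absurd h hz⟩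
  choose gnext hgnext using hgnex
  set Gmon : Ordinal → Ordinal :=
    fun γ => max (sSup ((fun z => gnext z + 1) '' Set.Iic γ)) (γ + 1) with hGmon
  have hGlt : ∀ γ, γ < ν.ord → Gmon γ < ν.ord := by
    intro γ hγ
    have hγ1 : γ + 1 < ν.ord := by
      rw [Ordinal.add_one_eq_succ]; exact hordlim.succ_lt hγ
    apply max_lt _ hγ1
    apply sSup_lt_ord_of_small' hordpos
    · rintro x ⟨z, hz, rfl⟩
      have hzν : z < ν.ord := lt_of_le_of_lt hz hγ
      have hgn := (hgnext z hzν).1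
      show gnext z + 1 < ν.ord
      rw [Ordinal.add_one_eq_succ]
      exact hordlim.succ_lt hgn
    · rw [hν.cof_eq]
      calc #((fun z => gnext z + 1) '' Set.Iic γ : Set Ordinal) ≤ #(Set.Iic γ) :=
        Cardinal.mk_image_le
      _ = #(Set.Iio (γ + 1)) := by rw [Ordinal.add_one_eq_succ, Order.Iio_succ]
      _ = Cardinal.lift.{1,0} ((γ + 1).card) := Ordinal.mk_Iio_ordinal _
      _ < Cardinal.lift.{1,0} ν := Cardinal.lift_lt.mpr (Cardinal.lt_ord.mp hγ1)
  have hGgt : ∀ γ, γ < Gmon γ := by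
    intro γ
    have hzz : γ < γ + 1 := by
      rw [Ordinal.add_one_eq_succ]; exact Order.lt_succ γ
    exact lt_of_lt_of_le hzz (le_max_right _ _)
  set bseq : Ordinal → ℕ → Ordinal := fun η n => Gmon^[n] η with hbseq
  have hb0 : ∀ η, bseq η 0 = η := fun η => rfl
  have hbsucc : ∀ η n, bseq η (n + 1) = Gmon (bseq η n) :=
    fun η n => Function.iterate_succ_apply' Gmon n η
  have hblt : ∀ η, η < ν.ord → ∀ n, bseq η n < ν.ord := by
    intro η hη n
    induction n with
    | zero => rw [hb0]; exact hη
    | succ n ih => rw [hbsucc]; exact hGlt _ ih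
  have hbmono : ∀ η n, bseq η n < bseq η (n + 1) := by
    intro η n
    rw [hbsucc]
    exact hGgt _
  set δfun : Ordinal → Ordinal := fun η => ⨆ n, bseq η n with hδfun
  have hbled : ∀ η n, bseq η n ≤ δfun η := by
    intro η n
    exact le_ciSup (Ordinal.bddAbove_range _) n
  have hbltδ : ∀ η n, bseq η n < δfun η := by
    intro η n
    exact lt_of_lt_of_le (hbmono η n) (hbled η (n + 1))
  have hδν : ∀ η, η < ν.ord → δfun η < ν.ord := by
    intro η hη
    apply Ordinal.iSup_lt_ord
    · rw [Cardinal.mk_nat, hν.cof_eq]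
      exact lt_of_lt_of_le hμbig hμν
    · exact hblt η hη
  have hδgt : ∀ η, η < δfun η := by
    intro η
    have := hbltδ η 0
    rwa [hb0] at this
  set LIM : A → Set Ordinal := fun a => {x | 0 < x ∧ x = sSup (C a ∩ Set.Iio x)} with hLIM
  -- cardinality of LIM
  have hLIMcard : ∀ a, #(LIM a) < Cardinal.lift.{1,0} μ := by
    intro a
    set F : ↥(LIM a) → ↥(C a) ⊕ PUnit.{2} := fun x =>
      if h : (C a ∩ Set.Ici x.1).Nonempty then Sum.inl ⟨sInf (C a ∩ Set.Ici x.1), (csInf_mem h).1⟩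
      else Sum.inr ⟨⟩ with hFdef
    have key : ∀ x y : ↥(LIM a), x.1 < y.1 → F x ≠ F y := by
      intro x y hlt hFeq
      obtain ⟨hy0, hysup⟩ := y.2
      have hyne : (C a ∩ Set.Iio y.1).Nonempty := by
        by_contra hempty
        rw [Set.not_nonempty_iff_eq_empty.mp hempty] at hysup
        rw [csSup_empty] at hysup
        exact absurd hysup.symm (ne_of_lt hy0)
      have hbdd : BddAbove (C a ∩ Set.Iio y.1) := ⟨y.1, fun w hw => hw.2.le⟩
      have hxlt : x.1 < sSup (C a ∩ Set.Iio y.1) := by rw [← hysup]; exact hlt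
      obtain ⟨γ, ⟨hγC, hγy⟩, hxγ⟩ := (lt_csSup_iff hbdd hyne).mp hxlt
      have hxne : (C a ∩ Set.Ici x.1).Nonempty := ⟨γ, hγC, hxγ.le⟩
      rw [hFdef] at hFeq
      simp only [dif_pos hxne] at hFeq
      by_cases hyne2 : (C a ∩ Set.Ici y.1).Nonempty
      · simp only [dif_pos hyne2] at hFeq
        have h1 : sInf (C a ∩ Set.Ici x.1) ≤ γ := csInf_le (OrderBot.bddBelow _) ⟨hγC, hxγ.le⟩
        have h2 : y.1 ≤ sInf (C a ∩ Set.Ici y.1) := (csInf_mem hyne2).2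
        have h3 : sInf (C a ∩ Set.Ici x.1) = sInf (C a ∩ Set.Ici y.1) := by
          have := Sum.inl.inj hFeq
          exact congrArg Subtype.val this
        rw [h3] at h1
        exact absurd (lt_of_le_of_lt (le_trans h2 h1) hγy) (lt_irrefl _)
      · simp only [dif_neg hyne2] at hFeq
        exact (Sum.inl_ne_inr hFeq : False)
    have hFinj : Function.Injective F := by
      intro x y hxy
      rcases lt_trichotomy x.1 y.1 with h | h | h
      · exact absurd hxy (key x y h)
      · exact Subtype.ext h
      · exact absurd hxy.symm (key y x h)
    have h1 : #(LIM a) ≤ #(↥(C a) ⊕ PUnit.{2}) := Cardinal.mk_le_of_injective hFinj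
    have h2 : #(↥(C a) ⊕ PUnit.{2}) = #(C a) + 1 := by
      rw [Cardinal.mk_sum]
      simp
    rw [h2] at h1
    exact lt_of_le_of_lt h1 (Cardinal.add_lt_of_lt hℵμ (hCsmall a) hμ1)
  -- the catching lemma
  have hcatch : ∀ η, η < ν.ord → {a | δfun η ∈ LIM a} ∈ U := by
    intro η hη
    set Q : ℕ → Set A := fun n => {a | cmin (bseq η n) a ∈ C a ∧ bseq η n < cmin (bseq η n) a ∧
        cmin (bseq η n) a < f a ∧ cmin (bseq η n) a < gnext (bseq η n)} with hQ
    have hQU : ∀ n, Q n ∈ U := by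
      intro n
      have hb := hblt η hη n
      have h1 := hP (bseq η n) hb
      have h2' : {a | cmin (bseq η n) a < gnext (bseq η n)} ∈ (U : Filter A) := (hgnext _ hb).2
      apply Filter.mem_of_superset (Filter.inter_mem h1 h2')
      rintro a ⟨⟨u1, u2, u3⟩, u4⟩
      exact ⟨u1, u2, u3, u4⟩
    have hA := sigma_iInter' hU Q hQU
    apply Filter.mem_of_superset hA
    intro a ha
    rw [Set.mem_iInter] at ha
    set γ : ℕ → Ordinal := fun n => cmin (bseq η n) a with hγ
    have hγC : ∀ n, γ n ∈ C a := fun n => (ha n).1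
    have h1 : ∀ n, bseq η n < γ n := fun n => (ha n).2.1
    have h2 : ∀ n, γ n < bseq η (n + 1) := by
      intro n
      have h4 := (ha n).2.2.2
      have h5 : gnext (bseq η n) + 1 ≤ Gmon (bseq η n) := by
        apply le_trans _ (le_max_left _ _)
        apply le_csSup
        · refine ⟨ν.ord, ?_⟩
          rintro w ⟨z, hz, rfl⟩
          have hzν : z < ν.ord := lt_of_le_of_lt hz (hblt η hη n)
          have hgn := (hgnext z hzν).1
          have : gnext z + 1 < ν.ord := by
            rw [Ordinal.add_one_eq_succ]; exact hordlim.succ_lt hgn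
          exact this.le
        · exact ⟨bseq η n, Set.mem_Iic.mpr le_rfl, rfl⟩
      rw [hbsucc]
      have hzz : gnext (bseq η n) < gnext (bseq η n) + 1 := by
        rw [Ordinal.add_one_eq_succ]; exact Order.lt_succ _
      exact lt_of_lt_of_le (lt_trans h4 hzz) h5
    have hγδ : ∀ n, γ n < δfun η := fun n => lt_of_lt_of_le (h2 n) (hbled η (n + 1))
    show δfun η ∈ LIM a
    refine ⟨lt_of_le_of_lt (zero_le (a := η)) (hδgt η), ?_⟩
    apply le_antisymm
    · apply ciSup_le
      intro n
      calc bseq η n ≤ γ n := (h1 n).le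
      _ ≤ sSup (C a ∩ Set.Iio (δfun η)) :=
        le_csSup ⟨δfun η, fun w hw => hw.2.le⟩ ⟨hγC n, hγδ n⟩
    · exact csSup_le ⟨γ 0, hγC 0, hγδ 0⟩ (fun w hw => hw.2.le)
  -- the image set
  set S : Set Ordinal := δfun '' Set.Iio ν.ord with hSdef
  have hSsub : S ⊆ Set.Iio ν.ord := by
    rintro x ⟨η, hη, rfl⟩
    exact hδν η hη
  have hScard : #S = Cardinal.lift.{1,0} ν := by
    apply le_antisymm
    · calc #S ≤ #(Set.Iio ν.ord) := Cardinal.mk_le_mk_of_subset hSsub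
      _ = Cardinal.lift.{1,0} ν := by rw [Ordinal.mk_Iio_ordinal, Cardinal.card_ord]
    · by_contra hcon
      push_neg at hcon
      have hlt : sSup S < ν.ord := by
        apply sSup_lt_ord_of_small' hordpos S (fun x hx => hSsub hx)
        rw [hν.cof_eq]
        exact hcon
      have hmem : δfun (sSup S) ∈ S := ⟨sSup S, hlt, rfl⟩
      have hle : δfun (sSup S) ≤ sSup S :=
        le_csSup ⟨ν.ord, fun w hw => (hSsub hw).le⟩ hmem
      exact absurd hle (not_le.mpr (hδgt _))
  have hee : Nonempty (ν.ord.ToType ≃ ↥S) := by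
    apply equiv_of_lift_mk_eq'
    rw [Cardinal.mk_toType, Cardinal.card_ord, hScard]
  obtain ⟨e⟩ := hee
  refine ⟨ν.ord.ToType, fun i => {a | (e i).1 ∈ LIM a}, ?_, ?_, ?_⟩
  · rw [Cardinal.mk_toType, Cardinal.card_ord]
  · intro i
    obtain ⟨η, hη, hδη⟩ := (e i).2
    have hc := hcatch η hη
    show {a | (e i).1 ∈ LIM a} ∈ U
    rw [← hδη]
    exact hc
  · intro t ht
    rw [Set.eq_empty_iff_forall_notMem]
    intro a ha
    have hmem : ∀ i : ↥t, (e i.1).1 ∈ LIM a := by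
      intro i
      have := Set.mem_iInter₂.mp ha i.1 i.2
      exact this
    set F3 : ↥t → ↥(LIM a) := fun i => ⟨(e i.1).1, hmem i⟩ with hF3
    have hF3inj : Function.Injective F3 := by
      intro i j hij
      have h1 : (F3 i).1 = (F3 j).1 := congrArg Subtype.val hij
      have h1' : (e i.1).1 = (e j.1).1 := h1
      have h2 : e i.1 = e j.1 := Subtype.ext h1'
      have h3 : i.1 = j.1 := e.injective h2
      exact Subtype.ext h3
    have hle : Cardinal.lift.{1,0} #(↥t) ≤ Cardinal.lift.{0,1} #(↥(LIM a)) :=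
      Cardinal.lift_mk_le'.mpr ⟨⟨F3, hF3inj⟩⟩
    rw [ht] at hle
    have hle' : Cardinal.lift.{1,0} μ ≤ #(LIM a) := by simpa using hle
    exact absurd (lt_of_le_of_lt hle' (hLIMcard a)) (lt_irrefl _)

/-- let `U` be a σ-complete ultrafilter over `A`, `μ ≤ ν` cardinals with `ν`
regular, and `j : V → M ≈ Ult(V,U)` the induced ultrapower embedding.  Then `U` is
`(μ, ν)`-regular iff `cf^M(sup(j''ν)) < j(μ)`.

Here the ordinals of the ultrapower `M` are realized as germs of `Ordinal`-valued
functions modulo `U`; `j(α)` is the constant germ at `α`, so `sup(j''ν)` is the least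
upper bound `s` of the constant germs at ordinals `α < ν` (as an ordinal, `ν`
is identified with `ν.ord`).  By Łoś's theorem, `cf^M([f]_U) = [a ↦ cf(f(a))]_U`, so
`cf^M(s) < j(μ)` says precisely that some representative `f` of `s` satisfies
`cf (f a) < μ` for `U`-almost all `a`. -/
theorem stmt4 {A : Type} (U : Ultrafilter A) (hU : SigmaComplete (U : Filter A))
    (μ ν : Cardinal) (hμν : μ ≤ ν) (hν : ν.IsRegular)
    (s : (U : Filter A).Germ Ordinal)
    (hs : IsLUB {g : (U : Filter A).Germ Ordinal |
      ∃ α : Ordinal, α < ν.ord ∧ g = ↑(fun _ : A => α)} s) :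
    IsRegUF U μ ν ↔
      ∃ f : A → Ordinal, (↑f : (U : Filter A).Germ Ordinal) = s ∧
        {a : A | (f a).cof < μ} ∈ U := by
  constructor
  · intro hreg
    exact forward' hν hs hreg
  · rintro ⟨f, hfs, hf⟩
    exact backward' hU hμν hν hs hfs hf
end

section
/- Let λ be a regular cardinal and δ ≤ λ an uncountable cardinal. If there exists a δ-complete uniform ultrafilter over λ, then there exists a δ-complete weakly normal uniform ultrafilter over λ. -/
open Cardinal Filter

/-- A filter is `δ`-complete if it is closed under intersections of fewer than `δ`
of its members. -/
def UComplete {A : Type} (δ : Cardinal) (F : Filter A) : Prop :=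
  ∀ s : Set (Set A), #s < δ → (∀ t ∈ s, t ∈ F) → ⋂₀ s ∈ F

/-- let `λ` be a regular cardinal and `δ ≤ λ` an uncountable cardinal.
If there exists a `δ`-complete uniform ultrafilter over `λ`, then there exists a
`δ`-complete weakly normal uniform ultrafilter over `λ`.  (Here `λ` is realized as the
canonical type `lam.ord.ToType` of ordinals below `λ`; uniform means every member of the
ultrafilter has cardinality `λ`, and weakly normal means every function regressive on a
large set is bounded on a large set.) -/
theorem stmt5 (lam δ : Cardinal) (hlam : lam.IsRegular) (hδ : ℵ₀ < δ) (hδlam : δ ≤ lam)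
    (h : ∃ U : Ultrafilter lam.ord.ToType,
      UComplete δ (U : Filter lam.ord.ToType) ∧ ∀ X ∈ U, #X = lam) :
    ∃ U : Ultrafilter lam.ord.ToType,
      UComplete δ (U : Filter lam.ord.ToType) ∧ (∀ X ∈ U, #X = lam) ∧
      ∀ f : lam.ord.ToType → lam.ord.ToType, {α | f α < α} ∈ U →
        ∃ γ : lam.ord.ToType, {α | f α < γ} ∈ U := by
  obtain ⟨U, hUc, hUu⟩ := h
  -- the relation `f <_U g`
  let rU : (lam.ord.ToType → lam.ord.ToType) → (lam.ord.ToType → lam.ord.ToType) → Prop :=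
    fun f g => {α | f α < g α} ∈ U
  have hempty : (∅ : Set lam.ord.ToType) ∉ (U : Filter lam.ord.ToType) := Filter.empty_notMem _
  have hirr : ∀ f, ¬ rU f f := by
    intro f hf
    have hf' : {α | f α < f α} ∈ (U : Filter lam.ord.ToType) := hf
    have heq : {α | f α < f α} = (∅ : Set lam.ord.ToType) := by ext α; simp
    rw [heq] at hf'
    exact hempty hf'
  have htrans : ∀ f g k, rU f g → rU g k → rU f k := by
    intro f g k h1 h2
    have : {α | f α < g α} ∩ {α | g α < k α} ∈ U := U.toFilter.inter_mem h1 h2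
    refine U.toFilter.mem_of_superset this ?_
    rintro α ⟨ha, hb⟩
    simp only [Set.mem_setOf_eq] at ha hb ⊢
    exact lt_trans ha hb
  haveI : IsIrrefl (lam.ord.ToType → lam.ord.ToType) rU := ⟨hirr⟩
  haveI : IsTrans (lam.ord.ToType → lam.ord.ToType) rU := ⟨htrans⟩
  haveI : IsStrictOrder (lam.ord.ToType → lam.ord.ToType) rU := ⟨⟩
  -- `rU` is well-founded since `U` is countably complete
  have hwf : WellFounded rU := by
    rw [RelEmbedding.wellFounded_iff_isEmpty]
    constructor
    intro e
    have he : ∀ n : ℕ, {α | e (n + 1) α < e n α} ∈ U := fun n =>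
      e.map_rel_iff.2 (Nat.lt_succ_self n)
    have hmem : ⋂₀ Set.range (fun n : ℕ => {α | e (n + 1) α < e n α}) ∈ U := by
      apply hUc
      · exact lt_of_le_of_lt (mk_range_le.trans (by simp)) hδ
      · rintro t ⟨n, rfl⟩
        exact he n
    obtain ⟨α, hα⟩ := U.nonempty_of_mem hmem
    have hdesc : ∀ n : ℕ, (fun n => e n α) (n + 1) < (fun n => e n α) n := fun n =>
      hα _ ⟨n, rfl⟩
    exact (RelEmbedding.wellFounded_iff_isEmpty.1 wellFounded_lt).false
      (RelEmbedding.natGT (fun n => e n α) hdesc)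
  -- the set of functions with uniform pushforward
  have hidS : id ∈ {f : lam.ord.ToType → lam.ord.ToType |
      ∀ X : Set lam.ord.ToType, f ⁻¹' X ∈ U → #X = lam} := fun X hX => hUu X hX
  obtain ⟨f, hfS, hfmin⟩ := hwf.has_min _ ⟨id, hidS⟩
  refine ⟨U.map f, ?_, ?_, ?_⟩
  · -- δ-complete
    intro s hs hst
    have heq : f ⁻¹' ⋂₀ s = ⋂₀ ((fun t => f ⁻¹' t) '' s) := by
      ext x; simp [Set.mem_sInter]
    show f ⁻¹' ⋂₀ s ∈ U
    rw [heq]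
    apply hUc
    · exact lt_of_le_of_lt mk_image_le hs
    · rintro t ⟨u, hu, rfl⟩
      exact hst u hu
  · -- uniform
    intro X hX
    exact hfS X hX
  · -- weakly normal
    intro g hg
    have hA : {α | g (f α) < f α} ∈ U := hg
    have hgf : g ∘ f ∉ {f : lam.ord.ToType → lam.ord.ToType |
        ∀ X : Set lam.ord.ToType, f ⁻¹' X ∈ U → #X = lam} :=
      fun hmem => hfmin (g ∘ f) hmem hA
    rw [Set.mem_setOf_eq] at hgf
    push_neg at hgf
    obtain ⟨X, hXU, hXne⟩ := hgf
    have hXlt : #X < lam := by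
      rcases lt_or_eq_of_le ((mk_set_le X).trans_eq
        (by rw [Cardinal.mk_toType, Cardinal.card_ord])) with h' | h'
      · exact h'
      · exact absurd h' hXne
    -- X is bounded since lam is regular
    haveI : IsWellOrder lam.ord.ToType (· < ·) := isWellOrder_lt
    have hbound : Set.Bounded (· < ·) X := by
      by_contra hc
      have hcof : IsCofinal X := by
        by_contra hc'; exact hc (not_isCofinal_iff.1 hc')
      have hle := Order.cof_le hcof
      rw [Ordinal.cof_toType, hlam.cof_ord] at hle
      exact absurd hXlt (not_lt.2 hle)
    obtain ⟨γ, hγ⟩ := hbound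
    refine ⟨γ, ?_⟩
    show f ⁻¹' {β | g β < γ} ∈ U
    have hsub : ((g ∘ f) ⁻¹' X) ∩ {α | g (f α) < f α} ⊆ f ⁻¹' {β | g β < γ} := by
      rintro α ⟨ha, _⟩
      exact hγ _ ha
    exact U.toFilter.mem_of_superset (U.toFilter.inter_mem hXU hA) hsub
end

section
/- Let λ be a regular cardinal, μ a cardinal, and U a σ-complete weakly normal uniform ultrafilter over λ. Then U is (μ, λ)-regular if and only if {α < λ : cf(α) < μ} ∈ U. -/
open Cardinal Filter

/-- `cf(α) < μ`: the element `α` of a linear order has a cofinal subset of its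
predecessors of cardinality `< μ`. -/
def cofLt {θ : Type} [LinearOrder θ] (α : θ) (μ : Cardinal) : Prop :=
  ∃ s : Set θ, #s < μ ∧ (∀ β ∈ s, β < α) ∧ ∀ β < α, ∃ γ ∈ s, β ≤ γ

section aux
variable {lam : Cardinal}

/-- The ordinal corresponding to an element of `lam.ord.ToType`. -/
noncomputable def toOrd (lam : Cardinal) (α : lam.ord.ToType) : Ordinal :=
  ((Ordinal.ToType.mk (o := lam.ord)).symm α).1

theorem toOrd_lt_ord (α : lam.ord.ToType) : toOrd lam α < lam.ord :=
  ((Ordinal.ToType.mk (o := lam.ord)).symm α).2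

theorem toOrd_lt_toOrd {α β : lam.ord.ToType} : toOrd lam α < toOrd lam β ↔ α < β := by
  rw [toOrd, toOrd, Subtype.coe_lt_coe]
  exact (Ordinal.ToType.mk (o := lam.ord)).symm.lt_iff_lt

theorem toOrd_le_toOrd {α β : lam.ord.ToType} : toOrd lam α ≤ toOrd lam β ↔ α ≤ β := by
  simp only [← not_lt, toOrd_lt_toOrd]

theorem toOrd_injective : Function.Injective (toOrd lam) := fun x y h =>
  le_antisymm (toOrd_le_toOrd.1 h.le) (toOrd_le_toOrd.1 h.ge)

theorem toOrd_enum {o : Ordinal} (h : o < lam.ord) :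
    toOrd lam ((Ordinal.ToType.mk (o := lam.ord)) ⟨o, h⟩) = o := by
  simp [toOrd]

theorem card_seg_lt (hlam : ℵ₀ ≤ lam) (γ : lam.ord.ToType) :
    #{α : lam.ord.ToType | α ≤ γ} < lam := by
  have ho : Order.succ (toOrd lam γ) < lam.ord :=
    (Cardinal.isSuccLimit_ord hlam).succ_lt (toOrd_lt_ord γ)
  have hle : #{α : lam.ord.ToType | α ≤ γ} ≤ #(Order.succ (toOrd lam γ)).ToType := by
    refine Cardinal.mk_le_of_injective (f := fun x : {α : lam.ord.ToType | α ≤ γ} =>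
      Ordinal.ToType.mk (o := _) ⟨toOrd lam x.1,
        lt_of_le_of_lt (toOrd_le_toOrd.2 x.2) (Order.lt_succ _)⟩) ?_
    intro x y hxy
    have := congrArg (fun z => ((Ordinal.ToType.mk (o := Order.succ (toOrd lam γ))).symm z).1) hxy
    simp only [OrderIso.symm_apply_apply] at this
    exact Subtype.ext (toOrd_injective this)
  refine hle.trans_lt ?_
  rw [Cardinal.mk_toType]
  exact Cardinal.lt_ord.1 ho

theorem exists_bound (hlam : lam.IsRegular) {s : Set lam.ord.ToType} (hs : #s < lam) :
    ∃ b, ∀ x ∈ s, x < b := by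
  have hlsub : Ordinal.lsub (fun x : s => toOrd lam x.1) < lam.ord :=
    Cardinal.lsub_lt_ord_of_isRegular hlam hs fun x => toOrd_lt_ord _
  refine ⟨Ordinal.ToType.mk (o := lam.ord) ⟨_, hlsub⟩, fun x hx => ?_⟩
  rw [← toOrd_lt_toOrd, toOrd_enum]
  exact Ordinal.lt_lsub _ (⟨x, hx⟩ : s)
end aux

/-- let `λ` be a regular cardinal, `μ` a cardinal, and `U` a σ-complete
weakly normal uniform ultrafilter over `λ` (realized as the type `lam.ord.ToType` of
ordinals below `λ`).  Then `U` is `(μ, λ)`-regular iff `{α < λ : cf(α) < μ} ∈ U`. -/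
theorem stmt7 (lam μ : Cardinal) (hlam : lam.IsRegular)
    (U : Ultrafilter lam.ord.ToType)
    (hσ : SigmaComplete (U : Filter lam.ord.ToType))
    (huni : ∀ X ∈ U, #X = lam)
    (hwn : ∀ f : lam.ord.ToType → lam.ord.ToType, {α | f α < α} ∈ U →
      ∃ γ : lam.ord.ToType, {α | f α < γ} ∈ U) :
    IsRegUF U μ lam ↔ {α : lam.ord.ToType | cofLt α μ} ∈ U := by
  classical
  have hmk : #lam.ord.ToType = lam := Cardinal.mk_ord_toType lam
  have haleph : ℵ₀ ≤ lam := hlam.aleph0_le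
  have tail : ∀ γ : lam.ord.ToType, {α | γ < α} ∈ U := by
    intro γ
    by_contra h
    have h2 : {α : lam.ord.ToType | γ < α}ᶜ ∈ U := Ultrafilter.compl_mem_iff_notMem.2 h
    have h3 := huni _ h2
    have h4 : ({α : lam.ord.ToType | γ < α}ᶜ : Set _) = {α | α ≤ γ} := by
      ext α; simp [not_lt]
    rw [h4] at h3
    exact absurd h3 (card_seg_lt haleph γ).ne
  constructor
  · rintro ⟨ι, X, hι, hXU, hXint⟩
    obtain ⟨e⟩ : Nonempty (ι ≃ lam.ord.ToType) := Cardinal.eq.1 (by rw [hι, hmk])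
    set G : lam.ord.ToType → Set lam.ord.ToType := fun α => {γ | α ∈ X (e.symm γ)} with hG
    have hGμ : ∀ α, #(G α) < μ := by
      intro α
      by_contra h
      obtain ⟨p, hp, hpμ⟩ := Cardinal.le_mk_iff_exists_subset.1 (not_lt.1 h)
      have hs' : #(e.symm '' p : Set ι) = μ := by
        rw [Cardinal.mk_image_eq e.symm.injective]; exact hpμ
      have hempty := hXint _ hs'
      have hmem : α ∈ ⋂ i ∈ (e.symm '' p : Set ι), X i := by
        refine Set.mem_iInter₂.2 fun i hi => ?_
        obtain ⟨γ, hγ, rfl⟩ := hi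
        exact hp hγ
      rw [hempty] at hmem
      exact hmem
    by_contra hS
    have hSc : {α : lam.ord.ToType | cofLt α μ}ᶜ ∈ U := Ultrafilter.compl_mem_iff_notMem.2 hS
    set f : lam.ord.ToType → lam.ord.ToType := fun α =>
      if h : ∃ β, β < α ∧ ∀ δ ∈ G α, β ≤ δ → ¬ δ < α then h.choose else α with hf
    have hfspec : ∀ α, ¬ cofLt α μ →
        f α < α ∧ ∀ δ ∈ G α, f α ≤ δ → ¬ δ < α := by
      intro α hα
      have hex : ∃ β, β < α ∧ ∀ δ ∈ G α, β ≤ δ → ¬ δ < α := by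
        by_contra hne
        push_neg at hne
        refine hα ⟨{δ ∈ G α | δ < α},
          lt_of_le_of_lt (Cardinal.mk_le_mk_of_subset (Set.sep_subset _ _)) (hGμ α),
          fun β hβ => hβ.2, fun β hβ => ?_⟩
        obtain ⟨δ, hδG, hβδ, hδα⟩ := hne β hβ
        exact ⟨δ, ⟨hδG, hδα⟩, hβδ⟩
      have hfα : f α = hex.choose := by simp only [hf]; exact dif_pos hex
      rw [hfα]
      exact ⟨hex.choose_spec.1, hex.choose_spec.2⟩
    obtain ⟨γ₀, hγ₀⟩ := hwn f (Filter.mem_of_superset hSc (fun α hα => (hfspec α hα).1))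
    have hY : {α | γ₀ ∈ G α} ∈ U := by
      have := hXU (e.symm γ₀)
      simpa [hG, Set.setOf_mem_eq] using this
    obtain ⟨α, hα⟩ := Ultrafilter.nonempty_of_mem
      (inter_mem (inter_mem (inter_mem hSc hγ₀) hY) (tail γ₀))
    obtain ⟨⟨⟨hα1, hα2⟩, hα3⟩, hα4⟩ := hα
    exact (hfspec α hα1).2 γ₀ hα3 (le_of_lt hα2) hα4
  · intro hS
    have hlt : ℵ₀ < lam := by
      rcases haleph.lt_or_eq with h | h
      · exact h
      · exfalso
        have hcount : Countable lam.ord.ToType := by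
          rw [← Cardinal.mk_le_aleph0_iff, hmk, ← h]
        have hsing : ∀ x : lam.ord.ToType, ({x}ᶜ : Set _) ∈ U := by
          intro x
          refine Ultrafilter.compl_mem_iff_notMem.2 fun hx => ?_
          have h1 := huni _ hx
          rw [Cardinal.mk_singleton] at h1
          exact Cardinal.one_lt_aleph0.ne' (h.trans h1.symm)
        have hint := hσ (Set.range fun x : lam.ord.ToType => ({x}ᶜ : Set _))
          (Set.countable_range _) (by rintro t ⟨x, rfl⟩; exact hsing x)
        have hem : ⋂₀ (Set.range fun x : lam.ord.ToType => ({x}ᶜ : Set _)) = ∅ := by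
          ext α
          simp only [Set.mem_sInter, Set.mem_range, forall_exists_index, Set.mem_empty_iff_false,
            iff_false, not_forall]
          exact ⟨{α}ᶜ, α, rfl, by simp⟩
        rw [hem] at hint
        exact Filter.empty_notMem _ hint
    have hμpos : 0 < μ := by
      obtain ⟨α₀, hα₀⟩ := Ultrafilter.nonempty_of_mem hS
      obtain ⟨t, ht, -⟩ := hα₀
      exact (Cardinal.zero_le _).trans_lt ht
    have hEex : ∀ α : lam.ord.ToType, ∃ s : Set lam.ord.ToType,
        cofLt α μ → #s < μ ∧ (∀ β ∈ s, β < α) ∧ ∀ β < α, ∃ γ ∈ s, β ≤ γ := by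
      intro α
      by_cases h : cofLt α μ
      · obtain ⟨s, hs⟩ := h; exact ⟨s, fun _ => hs⟩
      · exact ⟨∅, fun hc => absurd hc h⟩
    choose E hE using hEex
    set f : lam.ord.ToType → lam.ord.ToType → lam.ord.ToType := fun γ α =>
      if h : ∃ δ, δ ∈ E α ∧ γ ≤ δ ∧ δ < α then h.choose else α with hfdef
    have hfU : ∀ γ, {α | f γ α < α} ∈ U := by
      intro γ
      refine Filter.mem_of_superset (inter_mem hS (tail γ)) ?_
      rintro α ⟨hα1, hα2⟩
      obtain ⟨h1, h2, h3⟩ := hE α hα1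
      obtain ⟨δ, hδ, hγδ⟩ := h3 γ hα2
      have hex : ∃ δ, δ ∈ E α ∧ γ ≤ δ ∧ δ < α := ⟨δ, hδ, hγδ, h2 δ hδ⟩
      have hfα : f γ α = hex.choose := by simp only [hfdef]; exact dif_pos hex
      show f γ α < α
      rw [hfα]
      exact hex.choose_spec.2.2
    choose dl hdl using fun γ => hwn (f γ) (hfU γ)
    set d : lam.ord.ToType → lam.ord.ToType := fun γ => max γ (dl γ) with hd
    set X' : lam.ord.ToType → Set lam.ord.ToType := fun γ =>
      {α | cofLt α μ ∧ γ < α ∧ ∃ δ ∈ E α, γ ≤ δ ∧ δ < dl γ} with hX'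
    have hX'U : ∀ γ, X' γ ∈ U := by
      intro γ
      refine Filter.mem_of_superset (inter_mem (inter_mem hS (tail γ)) (hdl γ)) ?_
      rintro α ⟨⟨hα1, hα2⟩, hα3⟩
      obtain ⟨h1, h2, h3⟩ := hE α hα1
      obtain ⟨δ, hδ, hγδ⟩ := h3 γ hα2
      have hex : ∃ δ, δ ∈ E α ∧ γ ≤ δ ∧ δ < α := ⟨δ, hδ, hγδ, h2 δ hδ⟩
      have hfα : f γ α = hex.choose := by simp only [hfdef]; exact dif_pos hex
      refine ⟨hα1, hα2, hex.choose, hex.choose_spec.1, hex.choose_spec.2.1, ?_⟩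
      rw [← hfα]
      exact hα3
    set C : Set lam.ord.ToType := {β | ∀ γ < β, d γ < β} with hC
    have hCunb : ∀ b, ∃ β ∈ C, b < β := by
      intro b
      have hstep : ∀ x : lam.ord.ToType, ∃ y, ∀ γ ≤ x, d γ < y := by
        intro x
        have himg : #(d '' {γ | γ ≤ x}) < lam :=
          lt_of_le_of_lt Cardinal.mk_image_le (card_seg_lt haleph x)
        obtain ⟨y, hy⟩ := exists_bound hlam himg
        exact ⟨y, fun γ hγ => hy _ (Set.mem_image_of_mem _ hγ)⟩
      choose step hstep using hstep
      set g : ℕ → lam.ord.ToType := fun n => step^[n] b with hg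
      have hgsucc : ∀ n, g (n + 1) = step (g n) := fun n =>
        Function.iterate_succ_apply' step n b
      have hlsub : Ordinal.lsub (fun n : ℕ => toOrd lam (g n)) < lam.ord :=
        Cardinal.lsub_lt_ord_of_isRegular hlam (by rwa [Cardinal.mk_nat])
          fun n => toOrd_lt_ord _
      refine ⟨Ordinal.ToType.mk (o := lam.ord) ⟨_, hlsub⟩, ?_, ?_⟩
      · intro γ hγ
        rw [← toOrd_lt_toOrd, toOrd_enum] at hγ
        obtain ⟨n, hn⟩ := Ordinal.lt_lsub_iff.1 hγ
        have hγn : γ ≤ g n := toOrd_le_toOrd.1 hn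
        have h1 : d γ < g (n + 1) := by rw [hgsucc]; exact hstep (g n) γ hγn
        have h2 : g (n + 1) < Ordinal.ToType.mk (o := lam.ord) ⟨_, hlsub⟩ := by
          rw [← toOrd_lt_toOrd, toOrd_enum]
          exact Ordinal.lt_lsub _ (n + 1)
        exact h1.trans h2
      · rw [← toOrd_lt_toOrd, toOrd_enum]
        have : toOrd lam (g 0) < Ordinal.lsub fun n : ℕ => toOrd lam (g n) :=
          Ordinal.lt_lsub _ 0
        simpa [hg] using this
    have hCcard : #C = lam := by
      refine le_antisymm (le_trans (Cardinal.mk_set_le C) hmk.le) ?_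
      by_contra h
      obtain ⟨b, hb⟩ := exists_bound hlam (not_le.1 h)
      obtain ⟨β, hβC, hbβ⟩ := hCunb b
      exact absurd (hb β hβC) (asymm hbβ)
    refine ⟨↥C, fun c => X' c.1, hCcard, fun c => hX'U c.1, ?_⟩
    intro s hs
    rw [Set.eq_empty_iff_forall_notMem]
    intro α hα
    rw [Set.mem_iInter₂] at hα
    have hw : ∀ c : ↥C, c ∈ s → ∃ δ, δ ∈ E α ∧ c.1 ≤ δ ∧ δ < dl c.1 := by
      intro c hc
      obtain ⟨-, -, δ, hδ1, hδ2, hδ3⟩ := hα c hc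
      exact ⟨δ, hδ1, hδ2, hδ3⟩
    choose w hw1 hw2 hw3 using hw
    have hsne : Nonempty ↥s := Cardinal.mk_ne_zero_iff.1 (by rw [hs]; exact hμpos.ne')
    obtain ⟨c₀⟩ := hsne
    have hcof : cofLt α μ := (hα c₀.1 c₀.2).1
    obtain ⟨hEcard, hElt, -⟩ := hE α hcof
    have hinj : Function.Injective (fun x : ↥s => (⟨w x.1 x.2, hw1 x.1 x.2⟩ : ↥(E α))) := by
      intro x y hxy
      have hwxy : w x.1 x.2 = w y.1 y.2 := congrArg Subtype.val hxy
      have key : ∀ (a b : ↥s), (a.1 : lam.ord.ToType) < b.1 → w a.1 a.2 < w b.1 b.2 := by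
        intro a b hab
        calc w a.1 a.2 < dl a.1.1 := hw3 a.1 a.2
          _ ≤ d a.1.1 := le_max_right _ _
          _ < b.1.1 := b.1.2 a.1.1 hab
          _ ≤ w b.1 b.2 := hw2 b.1 b.2
      rcases lt_trichotomy (x.1 : lam.ord.ToType) y.1 with h | h | h
      · exact absurd hwxy (key x y h).ne
      · exact Subtype.ext (Subtype.ext h)
      · exact absurd hwxy.symm (key y x h).ne
    have : μ ≤ #(E α) := by
      rw [← hs]
      exact Cardinal.mk_le_of_injective hinj
    exact absurd this (not_le.2 hEcard)
end

section
/- Suppose λ is a regular cardinal ≥ κ carrying no δ-complete uniform ultrafilter. Let {𝒜^α : α < 2^λ} enumerate all partitions of λ into fewer than δ pieces, with 𝒜^α = {A^α_ξ : ξ < δ_α} and δ_α < δ. Then the product space X = ∏_{α < 2^λ} δ_α (each δ_α discrete) is not λ-Lindelöf: the set Y = {f_γ : γ < λ}, where f_γ(α) is the unique ξ with γ ∈ A^α_ξ, has the property that every point g ∈ X has an open neighborhood meeting Y in fewer than λ points, yielding an open cover of X with no subcover of size < λ. -/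
open Cardinal

/-- A topological space is `μ`-Lindelöf if every open cover has a subcover of
size `< μ`. -/
def IsMuLindelof (μ : Cardinal) (X : Type) [TopologicalSpace X] : Prop :=
  ∀ 𝒰 : Set (Set X), (∀ O ∈ 𝒰, IsOpen O) → ⋃₀ 𝒰 = Set.univ →
    ∃ 𝒱 ⊆ 𝒰, #𝒱 < μ ∧ ⋃₀ 𝒱 = Set.univ

/-- suppose `δ ≤ κ ≤ λ` are uncountable cardinals, `λ` regular, and `λ`
(realized as the type `lam.ord.ToType` of ordinals below `λ`) carries no `δ`-complete
uniform ultrafilter.  Let `{𝒜^a : a ∈ ι}` enumerate all partitions of `λ` into fewer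
than `δ` pieces; here the partition `𝒜^a` is presented by a surjective coloring
`c a : λ → T a` onto a discrete space `T a` of size `δ_a < δ` (its pieces being the
fibers `A^a_ξ = (c a)⁻¹{ξ}`), and the enumeration is complete in the sense that every
partition of `λ` into fewer than `δ` (nonempty, pairwise disjoint) pieces equals the
family of fibers of some `c a`.  Then the product space `X = ∏_a T a` is not
`λ`-Lindelöf: the set `Y = {f_γ : γ < λ}`, where `f_γ a = c a γ`, has the property
that every point `g ∈ X` has an open neighborhood meeting `Y` in fewer than `λ`
points, yielding an open cover of `X` with no subcover of size `< λ`. -/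
theorem stmt16 (δ κ lam : Cardinal) (hδ : ℵ₀ < δ) (hδκ : δ ≤ κ) (hκlam : κ ≤ lam)
    (hreg : lam.IsRegular)
    (hno : ¬∃ U : Ultrafilter lam.ord.ToType,
      UComplete δ (U : Filter lam.ord.ToType) ∧ ∀ X ∈ U, #X = lam)
    (ι : Type) (T : ι → Type) [∀ a, TopologicalSpace (T a)]
    (hdisc : ∀ a, DiscreteTopology (T a)) (hsize : ∀ a, #(T a) < δ)
    (c : ∀ a, lam.ord.ToType → T a) (hsurj : ∀ a, Function.Surjective (c a))
    (hall : ∀ S : Set (Set lam.ord.ToType),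
      (∀ p ∈ S, p ≠ ∅) → (S.Pairwise fun p q => p ∩ q = ∅) → ⋃₀ S = Set.univ →
      #S < δ → ∃ a : ι, S = Set.range fun t : T a => (c a) ⁻¹' {t}) :
    (∀ g : ∀ a, T a, ∃ O : Set (∀ a, T a), IsOpen O ∧ g ∈ O ∧
      #(O ∩ Set.range fun (γ : lam.ord.ToType) (a : ι) => c a γ : Set (∀ a, T a)) < lam) ∧
    ¬IsMuLindelof lam (∀ a, T a) := by
  classical
  have hmkL : #(lam.ord.ToType) = lam := Cardinal.mk_ord_toType lam
  have hlampos : (0 : Cardinal) < lam :=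
    lt_of_lt_of_le Cardinal.aleph0_pos hreg.aleph0_le
  set f : lam.ord.ToType → ∀ a, T a := fun γ a => c a γ with hfdef
  set Y : Set (∀ a, T a) := Set.range f with hYdef
  -- key0: any coloring of L with < δ colors is refined-equal to some (c e)
  have key0 : ∀ (W : Type) (π : lam.ord.ToType → W), #(Set.range π) < δ →
      ∃ e : ι, ∀ γ : lam.ord.ToType, (c e) ⁻¹' {c e γ} = π ⁻¹' {π γ} := by
    intro W π hπ
    have h1 : ∀ p ∈ {A : Set lam.ord.ToType | A ≠ ∅ ∧ ∃ w, A = π ⁻¹' {w}}, p ≠ ∅ :=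
      fun p hp => hp.1
    have h2 : Set.Pairwise {A : Set lam.ord.ToType | A ≠ ∅ ∧ ∃ w, A = π ⁻¹' {w}}
        (fun p q => p ∩ q = ∅) := by
      intro p hp q hq hne
      obtain ⟨w1, rfl⟩ := hp.2
      obtain ⟨w2, rfl⟩ := hq.2
      rw [Set.eq_empty_iff_forall_notMem]
      rintro x ⟨hx1, hx2⟩
      simp only [Set.mem_preimage, Set.mem_singleton_iff] at hx1 hx2
      exact hne (by rw [hx1.symm.trans hx2])
    have h3 : ⋃₀ {A : Set lam.ord.ToType | A ≠ ∅ ∧ ∃ w, A = π ⁻¹' {w}} = Set.univ := by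
      apply Set.eq_univ_of_forall
      intro γ
      exact ⟨π ⁻¹' {π γ}, ⟨fun h => (Set.eq_empty_iff_forall_notMem.mp h γ) rfl, π γ, rfl⟩,
        rfl⟩
    have h4 : #{A : Set lam.ord.ToType | A ≠ ∅ ∧ ∃ w, A = π ⁻¹' {w}} < δ := by
      refine lt_of_le_of_lt ?_ hπ
      have hsub : {A : Set lam.ord.ToType | A ≠ ∅ ∧ ∃ w, A = π ⁻¹' {w}} ⊆
          Set.range (fun w : Set.range π => π ⁻¹' {w.1}) := by
        rintro A ⟨hne, w, rfl⟩
        obtain ⟨x, hx⟩ := Set.nonempty_iff_ne_empty.mpr hne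
        exact ⟨⟨w, ⟨x, hx⟩⟩, rfl⟩
      exact le_trans (Cardinal.mk_le_mk_of_subset hsub) Cardinal.mk_range_le
    obtain ⟨e, he⟩ := hall _ h1 h2 h3 h4
    refine ⟨e, fun γ => ?_⟩
    have hmem : π ⁻¹' {π γ} ∈ Set.range (fun t : T e => (c e) ⁻¹' {t}) := by
      rw [← he]
      exact ⟨fun h => (Set.eq_empty_iff_forall_notMem.mp h γ) rfl, π γ, rfl⟩
    obtain ⟨t, ht⟩ := hmem
    have hγt : c e γ = t := by
      have : γ ∈ π ⁻¹' {π γ} := rfl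
      rw [← ht] at this
      exact this
    rw [← ht, hγt]
  -- injectivity of f
  have finj : Function.Injective f := by
    intro γ γ' h
    by_contra hne
    have hr : #(Set.range (fun x : lam.ord.ToType => (x = γ : Prop))) < δ := by
      refine lt_of_le_of_lt (le_trans (Cardinal.mk_set_le _) (le_of_eq Cardinal.mk_Prop)) ?_
      exact lt_trans (by exact_mod_cast Cardinal.nat_lt_aleph0 2) hδ
    obtain ⟨e, he⟩ := key0 Prop (fun x : lam.ord.ToType => (x = γ : Prop)) hr
    have h1 := he γ
    have h2 : c e γ' = c e γ := (congrFun h e).symm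
    have hm : γ' ∈ (c e) ⁻¹' {c e γ} := h2
    rw [h1] at hm
    simp only [Set.mem_preimage, Set.mem_singleton_iff, eq_iff_iff] at hm
    exact hne (hm.mpr trivial).symm
  -- Part 1
  have part1 : ∀ g : ∀ a, T a, ∃ O : Set (∀ a, T a), IsOpen O ∧ g ∈ O ∧ #((O ∩ Y : Set (∀ a, T a))) < lam := by
    intro g
    by_contra hbadex
    push_neg at hbadex
    have hbad : ∀ O : Set (∀ a, T a), IsOpen O → g ∈ O → lam ≤ #((O ∩ Y : Set (∀ a, T a))) := hbadex
    -- any finite subfamily of the fibers of g meets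
    have Bad2 : ∀ F : Finset ι, ∃ γ : lam.ord.ToType, ∀ a ∈ F, c a γ = g a := by
      intro F
      have hO : IsOpen ((F : Set ι).pi fun a => ({g a} : Set (T a))) :=
        isOpen_set_pi F.finite_toSet fun a _ => isOpen_discrete _
      have hg : g ∈ (F : Set ι).pi fun a => ({g a} : Set (T a)) := fun a _ => rfl
      have hle := hbad _ hO hg
      have hne : ((F : Set ι).pi (fun a => ({g a} : Set (T a))) ∩ Y).Nonempty := by
        rw [Set.nonempty_iff_ne_empty]
        intro hem
        rw [hem] at hle
        simp only [Cardinal.mk_eq_zero_iff.mpr] at hle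
        have : lam ≤ 0 := le_trans hle (by simp)
        exact absurd this (not_le.mpr hlampos)
      obtain ⟨x, hxO, γ, rfl⟩ := hne
      exact ⟨γ, fun a ha => hxO a ha⟩
    -- each fiber of g has full size
    have Bad1 : ∀ a : ι, lam ≤ #((c a) ⁻¹' {g a}) := by
      intro a
      have hO : IsOpen ((fun x : ∀ b, T b => x a) ⁻¹' {g a}) :=
        (isOpen_discrete _).preimage (continuous_apply a)
      have hle := hbad _ hO rfl
      refine le_trans hle (le_of_eq ?_)
      have himg : (fun x : ∀ b, T b => x a) ⁻¹' {g a} ∩ Y = f '' ((c a) ⁻¹' {g a}) := by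
        ext x
        constructor
        · rintro ⟨hx, γ, rfl⟩
          exact ⟨γ, hx, rfl⟩
        · rintro ⟨γ, hγ, rfl⟩
          exact ⟨hγ, γ, rfl⟩
      rw [himg, Cardinal.mk_image_eq finj]
    -- keyg: fibers of g refine any small coloring
    have keyg : ∀ (W : Type) (π : lam.ord.ToType → W), #(Set.range π) < δ →
        ∃ (e : ι) (w : W), (c e) ⁻¹' {g e} = π ⁻¹' {w} := by
      intro W π hπ
      obtain ⟨e, he⟩ := key0 W π hπ
      obtain ⟨γ₀, hγ₀⟩ := hsurj e (g e)
      exact ⟨e, π γ₀, by rw [← hγ₀, he γ₀]⟩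
    have hexi : ∃ e : ι, True := by
      obtain ⟨e, _, _⟩ := keyg Unit (fun _ => ()) (by
        refine lt_of_le_of_lt (Cardinal.mk_set_le _) ?_
        simp only [Cardinal.mk_fintype, Fintype.card_unit, Nat.cast_one]
        exact lt_trans Cardinal.one_lt_aleph0 hδ)
      exact ⟨e, trivial⟩
    -- the filter generated by the fibers of g
    set 𝓕 : Filter lam.ord.ToType :=
      { sets := {A | ∃ e : ι, (c e) ⁻¹' {g e} ⊆ A}
        univ_sets := by
          obtain ⟨e, -⟩ := hexi
          exact ⟨e, Set.subset_univ _⟩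
        sets_of_superset := by
          rintro A B ⟨e, he⟩ hsub
          exact ⟨e, he.trans hsub⟩
        inter_sets := by
          rintro A B ⟨a, ha⟩ ⟨b, hb⟩
          obtain ⟨e, w, hew⟩ := keyg (T a × T b) (fun γ => (c a γ, c b γ)) (by
            refine lt_of_le_of_lt (Cardinal.mk_set_le _) ?_
            rw [Cardinal.mk_prod]
            simpa using Cardinal.mul_lt_of_lt hδ.le (hsize a) (hsize b))
          obtain ⟨γ, hγ⟩ := Bad2 {a, b, e}
          have hγe : γ ∈ (c e) ⁻¹' {g e} := by
            show c e γ = g e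
            exact hγ e (by simp)
          rw [hew] at hγe
          have hw : (c a γ, c b γ) = w := hγe
          have hwab : w = (g a, g b) := by
            rw [← hw, hγ a (by simp), hγ b (by simp)]
          refine ⟨e, fun γ' hγ' => ?_⟩
          rw [hew, hwab] at hγ'
          have hpair : (c a γ', c b γ') = (g a, g b) := hγ'
          have h1 : c a γ' = g a := congrArg Prod.fst hpair
          have h2 : c b γ' = g b := congrArg Prod.snd hpair
          exact ⟨ha h1, hb h2⟩ } with h𝓕
    have hFmem : ∀ A : Set lam.ord.ToType, A ∈ 𝓕 ↔ ∃ e : ι, (c e) ⁻¹' {g e} ⊆ A :=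
      fun A => Iff.rfl
    -- it is an ultrafilter
    have hcompl : ∀ s : Set lam.ord.ToType, sᶜ ∉ 𝓕 ↔ s ∈ 𝓕 := by
      intro s
      constructor
      · intro hns
        obtain ⟨e, w, hew⟩ := keyg Prop (fun γ => (γ ∈ s : Prop)) (by
          refine lt_of_le_of_lt (le_trans (Cardinal.mk_set_le _) (le_of_eq Cardinal.mk_Prop)) ?_
          exact lt_trans (by exact_mod_cast Cardinal.nat_lt_aleph0 2) hδ)
        by_cases hw : w
        · refine (hFmem s).mpr ⟨e, fun γ hγ => ?_⟩
          rw [hew] at hγ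
          have hps : (γ ∈ s) = w := hγ
          rw [← hps] at hw
          exact hw
        · exfalso
          refine hns ((hFmem sᶜ).mpr ⟨e, fun γ hγ => ?_⟩)
          rw [hew] at hγ
          have hps : (γ ∈ s) = w := hγ
          intro hmem
          rw [hps] at hmem
          exact hw hmem
      · intro hs hns
        obtain ⟨a, ha⟩ := (hFmem s).mp hs
        obtain ⟨b, hb⟩ := (hFmem sᶜ).mp hns
        obtain ⟨γ, hγ⟩ := Bad2 {a, b}
        have h1 : γ ∈ s := ha (show c a γ = g a from hγ a (by simp))
        have h2 : γ ∈ sᶜ := hb (show c b γ = g b from hγ b (by simp))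
        exact h2 h1
    refine hno ⟨Ultrafilter.ofComplNotMemIff 𝓕 hcompl, ?_, ?_⟩
    · -- δ-completeness
      intro s hs hmem'
      show ⋂₀ s ∈ 𝓕
      have hchoice : ∀ γ : lam.ord.ToType, γ ∉ ⋂₀ s → ∃ A : ↥s, γ ∉ A.1 := by
        intro γ h
        rw [Set.mem_sInter] at h
        push_neg at h
        obtain ⟨A, hA, hn⟩ := h
        exact ⟨⟨A, hA⟩, hn⟩
      set q : lam.ord.ToType → Option ↥s := fun γ =>
        if h : γ ∈ ⋂₀ s then none else some (hchoice γ h).choose with hqdef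
      have hqsmall : #(Set.range q) < δ := by
        refine lt_of_le_of_lt (Cardinal.mk_set_le _) ?_
        rw [Cardinal.mk_option]
        exact Cardinal.add_lt_of_lt hδ.le hs (lt_trans Cardinal.one_lt_aleph0 hδ)
      obtain ⟨e, w, hew⟩ := keyg (Option ↥s) q hqsmall
      match w, hew with
      | none, hew =>
        refine (hFmem _).mpr ⟨e, fun γ hγ => ?_⟩
        rw [hew] at hγ
        have hq : q γ = none := hγ
        by_contra hn
        rw [hqdef] at hq
        simp only [dif_neg hn] at hq
        exact Option.some_ne_none _ hq
      | some A, hew =>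
        exfalso
        obtain ⟨eA, heA⟩ := (hFmem A.1).mp (hmem' A.1 A.2)
        obtain ⟨γ, hγ⟩ := Bad2 {e, eA}
        have hγe : γ ∈ (c e) ⁻¹' {g e} := show c e γ = g e from hγ e (by simp)
        rw [hew] at hγe
        have hq : q γ = some A := hγe
        have hγA : γ ∉ A.1 := by
          rw [hqdef] at hq
          by_cases hγi : γ ∈ ⋂₀ s
          · simp only [dif_pos hγi] at hq
            exact (Option.some_ne_none _ hq.symm).elim
          · simp only [dif_neg hγi] at hq
            have := (hchoice γ hγi).choose_spec
            rwa [Option.some_inj.mp hq] at this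
        exact hγA (heA (show c eA γ = g eA from hγ eA (by simp)))
    · -- uniformity
      intro X hX
      obtain ⟨e, he⟩ := hX
      refine le_antisymm ?_ ?_
      · exact le_of_le_of_eq (Cardinal.mk_set_le X) hmkL
      · exact le_trans (Bad1 e) (Cardinal.mk_le_mk_of_subset he)
  refine ⟨part1, ?_⟩
  -- Part 2
  intro hlin
  obtain ⟨O, hO⟩ := Classical.axiomOfChoice part1
  obtain ⟨𝒱, h𝒱sub, h𝒱card, h𝒱cov⟩ := hlin (Set.range O)
    (by rintro _ ⟨g, rfl⟩; exact (hO g).1)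
    (Set.eq_univ_of_forall fun g => ⟨O g, ⟨g, rfl⟩, (hO g).2.1⟩)
  have hYsub : Y ⊆ ⋃ V : ↥𝒱, (V.1 ∩ Y) := by
    intro y hy
    have hyu : y ∈ ⋃₀ 𝒱 := h𝒱cov ▸ Set.mem_univ y
    obtain ⟨V, hV, hyV⟩ := hyu
    exact Set.mem_iUnion.mpr ⟨⟨V, hV⟩, hyV, hy⟩
  have hlt : #((⋃ V : ↥𝒱, (V.1 ∩ Y) : Set (∀ a, T a))) < lam := by
    refine lt_of_le_of_lt (Cardinal.mk_iUnion_le _) ?_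
    refine Cardinal.mul_lt_of_lt hreg.aleph0_le h𝒱card ?_
    refine Cardinal.iSup_lt_of_isRegular hreg h𝒱card ?_
    intro V
    obtain ⟨g, hg⟩ := h𝒱sub V.2
    rw [← hg]
    exact (hO g).2.2
  have hYlam : #Y = lam := by
    rw [hYdef, Cardinal.mk_range_eq f finj, hmkL]
  exact absurd (lt_of_le_of_lt (hYlam ▸ Cardinal.mk_le_mk_of_subset hYsub) hlt)
    (lt_irrefl lam)
end
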